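/- There is a bijection between automorphisms of the dutch windmill graph D_n^(k+1) restricted to its non-central vertices and automorphisms of D_n^k acting on its edges; consequently D'(D_n^k) = D(D_n^(k+1)) for all n ≥ 2 and k ≥ 3. -/

import Mathlib

open SimpleGraph

/-- The distinguishing index: least number of labels in an edge labeling
preserved only by the identity automorphism. -/
noncomputable def distinguishingIndex {V : Type*} (G : SimpleGraph V) : ℕ :=
  sInf {d : ℕ | ∃ f : Sym2 V → Fin d,
    ∀ φ : G ≃g G, (∀ e ∈ G.edgeSet, f (Sym2.map ⇑φ e) = f e) → ∀ v, φ v = v}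

/-- The distinguishing number: least number of labels in a vertex labeling
preserved only by the identity automorphism. -/
noncomputable def distinguishingNumber {V : Type*} (G : SimpleGraph V) : ℕ :=
  sInf {d : ℕ | ∃ f : V → Fin d,
    ∀ φ : G ≃g G, (∀ v, f (φ v) = f v) → ∀ v, φ v = v}

/-- The dutch windmill graph `D_n^k`: `n` copies of the cycle `C_k`
sharing one common central vertex (`none`). -/
def windmill (n k : ℕ) : SimpleGraph (Option (Fin n × Fin (k - 1))) :=
  SimpleGraph.fromRel (fun a b =>
    match a, b with
    | none, some (_, j) => j.val = 0 ∨ j.val = k - 2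
    | some (i, j), some (i', j') => i = i' ∧ j'.val = j.val + 1
    | _, _ => False)

lemma wm_adj_none_some (n k : ℕ) (i : Fin n) (j : Fin (k-1)) :
    (windmill n k).Adj none (some (i, j)) ↔ (j.val = 0 ∨ j.val = k - 2) := by
  simp [windmill, SimpleGraph.fromRel_adj]

lemma wm_adj_some_some (n k : ℕ) (i i' : Fin n) (j j' : Fin (k-1)) :
    (windmill n k).Adj (some (i, j)) (some (i', j')) ↔
      (i = i' ∧ (j'.val = j.val + 1 ∨ j.val = j'.val + 1)) := by
  simp only [windmill, SimpleGraph.fromRel_adj]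
  constructor
  · rintro ⟨hne, h | h⟩
    · exact ⟨h.1, Or.inl h.2⟩
    · exact ⟨h.1.symm, Or.inr h.2⟩
  · rintro ⟨rfl, h | h⟩
    · exact ⟨by simp [Prod.ext_iff]; omega, Or.inl ⟨rfl, h⟩⟩
    · exact ⟨by simp [Prod.ext_iff]; omega, Or.inr ⟨rfl, h⟩⟩

lemma wm_not_adj_none_none (n k : ℕ) : ¬ (windmill n k).Adj none none :=
  (windmill n k).irrefl

/-- the underlying vertex permutation for automorphism (σ, ε) -/
def wPerm (n m : ℕ) (σ : Equiv.Perm (Fin n)) (ε : Fin n → Bool) :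
    Option (Fin n × Fin m) ≃ Option (Fin n × Fin m) :=
  Equiv.optionCongr
  { toFun := fun p => (σ p.1, if ε p.1 then p.2.rev else p.2)
    invFun := fun p => (σ.symm p.1, if ε (σ.symm p.1) then p.2.rev else p.2)
    left_inv := by
      rintro ⟨i, j⟩
      simp only [Equiv.symm_apply_apply]
      by_cases h : ε i <;> simp [h, Fin.rev_rev]
    right_inv := by
      rintro ⟨i, j⟩
      simp only [Equiv.apply_symm_apply]
      by_cases h : ε (σ.symm i) <;> simp [h, Fin.rev_rev] }

lemma wPerm_none (n m σ ε) : wPerm n m σ ε none = none := rfl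
lemma wPerm_some (n m σ ε) (i : Fin n) (j : Fin m) :
    wPerm n m σ ε (some (i,j)) = some (σ i, if ε i then j.rev else j) := rfl

lemma val_rev {m : ℕ} (j : Fin m) : (j.rev : ℕ) = m - 1 - j := by
  simp [Fin.val_rev]; omega

/-- the graph automorphism -/
def wAct (n k : ℕ) (hk : 3 ≤ k) (σ : Equiv.Perm (Fin n)) (ε : Fin n → Bool) :
    windmill n k ≃g windmill n k := by
  refine ⟨wPerm n (k-1) σ ε, ?_⟩
  have hm : 2 ≤ k - 1 := by omega
  rintro (_ | ⟨i, j⟩) (_ | ⟨i', j'⟩)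
  · simp [wPerm_none]
  · simp only [wPerm_none, wPerm_some, wm_adj_none_some]
    have := j'.isLt
    by_cases h : ε i' <;> simp [h, val_rev] <;> omega
  · rw [(windmill n k).adj_comm, (windmill n k).adj_comm (some (i,j)) none]
    simp only [wPerm_none, wPerm_some, wm_adj_none_some]
    have := j.isLt
    by_cases h : ε i <;> simp [h, val_rev] <;> omega
  · simp only [wPerm_some, wm_adj_some_some]
    have := j.isLt; have := j'.isLt
    constructor
    · rintro ⟨h1, h2⟩
      have : i = i' := σ.injective h1
      subst this
      refine ⟨rfl, ?_⟩
      by_cases h : ε i <;> simp [h, val_rev] at h2 <;> omega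
    · rintro ⟨rfl, h2⟩
      refine ⟨rfl, ?_⟩
      by_cases h : ε i <;> simp [h, val_rev] <;> omega

lemma wm_two_nbrs (n k : ℕ) (hk : 3 ≤ k) (i : Fin n) (j : Fin (k-1)) :
    ∃ u v, ∀ x, (windmill n k).Adj x (some (i,j)) → x = u ∨ x = v := by
  have hj := j.isLt
  by_cases h0 : j.val = 0
  · refine ⟨none, some (i, ⟨1, by omega⟩), ?_⟩
    rintro (_ | ⟨i', j'⟩) hx
    · exact Or.inl rfl
    · rw [wm_adj_some_some] at hx
      obtain ⟨rfl, h | h⟩ := hx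
      · omega
      · right
        have : j' = (⟨1, by omega⟩ : Fin (k-1)) := by
          rw [Fin.eq_mk_iff_val_eq]; omega
        rw [this]
  · by_cases h1 : j.val = k - 2
    · refine ⟨none, some (i, ⟨k-3, by omega⟩), ?_⟩
      rintro (_ | ⟨i', j'⟩) hx
      · exact Or.inl rfl
      · rw [wm_adj_some_some] at hx
        obtain ⟨rfl, h | h⟩ := hx
        · right
          have : j' = (⟨k-3, by omega⟩ : Fin (k-1)) := by
            rw [Fin.eq_mk_iff_val_eq]; omega
          rw [this]
        · have := j'.isLt; omega
    · refine ⟨some (i, ⟨j.val - 1, by omega⟩), some (i, ⟨j.val + 1, by omega⟩), ?_⟩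
      rintro (_ | ⟨i', j'⟩) hx
      · rw [wm_adj_none_some] at hx; omega
      · rw [wm_adj_some_some] at hx
        obtain ⟨rfl, h | h⟩ := hx
        · left
          have : j' = (⟨j.val - 1, by omega⟩ : Fin (k-1)) := by
            rw [Fin.eq_mk_iff_val_eq]; omega
          rw [this]
        · right
          have : j' = (⟨j.val + 1, by omega⟩ : Fin (k-1)) := by
            rw [Fin.eq_mk_iff_val_eq]; omega
          rw [this]

lemma path_rigid (m : ℕ) (q : ℕ → ℕ)
    (hinj : ∀ a, a < m → ∀ b, b < m → q a = q b → a = b)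
    (h0 : q 0 = 0)
    (hstep : ∀ jv, jv + 1 < m → (q (jv+1) = q jv + 1 ∨ q jv = q (jv+1) + 1)) :
    ∀ j, j < m → q j = j := by
  intro jv
  induction jv using Nat.strong_induction_on with
  | _ jv ih =>
    intro h
    rcases jv with _ | v
    · exact h0
    · have ihv := ih v (by omega) (by omega)
      rcases hstep v h with hs | hs
      · omega
      · exfalso
        rcases v with _ | w
        · omega
        · have ihw := ih w (by omega) (by omega)
          have : w = w + 1 + 1 := hinj w (by omega) (w+1+1) h (by omega)
          omega

lemma wm_adj_none_some' (n k : ℕ) (x : Fin n × Fin (k-1)) :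
    (windmill n k).Adj none (some x) ↔ (x.2.val = 0 ∨ x.2.val = k - 2) := by
  obtain ⟨i, j⟩ := x; exact wm_adj_none_some n k i j

lemma wm_adj_some_some' (n k : ℕ) (x y : Fin n × Fin (k-1)) :
    (windmill n k).Adj (some x) (some y) ↔
      (x.1 = y.1 ∧ (y.2.val = x.2.val + 1 ∨ x.2.val = y.2.val + 1)) := by
  obtain ⟨i, j⟩ := x; obtain ⟨i', j'⟩ := y; exact wm_adj_some_some n k i i' j j'

theorem wm_classify (n k : ℕ) (hn : 2 ≤ n) (hk : 3 ≤ k)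
    (φ : windmill n k ≃g windmill n k) :
    ∃ σ ε, φ = wAct n k hk σ ε := by
  have hm : 2 ≤ k - 1 := by omega
  -- the center is fixed
  have hnone : φ none = none := by
    cases hc : φ none with
    | none => rfl
    | some x =>
      exfalso
      obtain ⟨i, j⟩ := x
      obtain ⟨u, v, huv⟩ := wm_two_nbrs n k hk i j
      set a1 : Option (Fin n × Fin (k-1)) := some (⟨0, by omega⟩, ⟨0, by omega⟩) with ha1
      set a2 : Option (Fin n × Fin (k-1)) := some (⟨1, by omega⟩, ⟨0, by omega⟩) with ha2
      set a3 : Option (Fin n × Fin (k-1)) := some (⟨0, by omega⟩, ⟨k-2, by omega⟩) with ha3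
      have hadj : ∀ a : Option (Fin n × Fin (k-1)),
          (windmill n k).Adj none a → (φ a = u ∨ φ a = v) := by
        intro a ha
        have : (windmill n k).Adj (φ none) (φ a) := φ.map_adj_iff.mpr ha
        rw [hc] at this
        exact huv (φ a) this.symm
      have e1 := hadj a1 (by rw [ha1, wm_adj_none_some]; left; rfl)
      have e2 := hadj a2 (by rw [ha2, wm_adj_none_some]; left; rfl)
      have e3 := hadj a3 (by rw [ha3, wm_adj_none_some]; right; rfl)
      have n12 : a1 ≠ a2 := by
        simp only [ha1, ha2, ne_eq, Option.some.injEq, Prod.mk.injEq, Fin.mk.injEq]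
        omega
      have n13 : a1 ≠ a3 := by
        simp only [ha1, ha3, ne_eq, Option.some.injEq, Prod.mk.injEq, Fin.mk.injEq]
        omega
      have n23 : a2 ≠ a3 := by
        simp only [ha2, ha3, ne_eq, Option.some.injEq, Prod.mk.injEq, Fin.mk.injEq]
        omega
      rcases e1 with h1 | h1 <;> rcases e2 with h2 | h2 <;> rcases e3 with h3 | h3 <;>
        first
          | exact n12 (φ.injective (h1.trans h2.symm))
          | exact n13 (φ.injective (h1.trans h3.symm))
          | exact n23 (φ.injective (h2.trans h3.symm))
  -- non-central vertices map to non-central vertices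
  have hsome : ∀ x : Fin n × Fin (k-1), ∃ y, φ (some x) = some y := by
    intro x
    cases hx : φ (some x) with
    | some y => exact ⟨y, rfl⟩
    | none => exact absurd (φ.injective (hx.trans hnone.symm)) (by simp)
  choose p hp using hsome
  have pinj : Function.Injective p := by
    intro x y h
    have : φ (some x) = φ (some y) := by rw [hp, hp, h]
    simpa using φ.injective this
  have padj : ∀ x y, (windmill n k).Adj (some x) (some y) →
      (windmill n k).Adj (some (p x)) (some (p y)) := by
    intro x y h
    rw [← hp, ← hp]
    exact φ.map_adj_iff.mpr h
  have pnadj : ∀ x, (windmill n k).Adj none (some x) →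
      (windmill n k).Adj none (some (p x)) := by
    intro x h
    rw [← hp, ← hnone]
    exact φ.map_adj_iff.mpr h
  -- first component
  have hfst0 : ∀ (i : Fin n) (jv : ℕ) (h : jv < k-1),
      (p (i, ⟨jv, h⟩)).1 = (p (i, ⟨0, by omega⟩)).1 := by
    intro i jv
    induction jv with
    | zero => intro h; rfl
    | succ v ih =>
      intro h
      have hv : v < k - 1 := by omega
      have hadj : (windmill n k).Adj (some (i, ⟨v, hv⟩)) (some (i, ⟨v+1, h⟩)) := by
        rw [wm_adj_some_some]
        exact ⟨rfl, Or.inl rfl⟩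
      have hpa := padj _ _ hadj
      rw [wm_adj_some_some'] at hpa
      rw [← hpa.1]
      exact ih hv
  set σf : Fin n → Fin n := fun i => (p (i, ⟨0, by omega⟩)).1 with hσf
  have hfst : ∀ (i : Fin n) (j : Fin (k-1)), (p (i, j)).1 = σf i := by
    intro i j
    exact hfst0 i j.val j.isLt
  have qinj : ∀ i, Function.Injective (fun j : Fin (k-1) => (p (i, j)).2) := by
    intro i j j' h
    have : p (i, j) = p (i, j') := Prod.ext_iff.mpr ⟨by rw [hfst, hfst], h⟩
    have := pinj this
    simpa using this
  have σinj : Function.Injective σf := by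
    intro i i' h
    obtain ⟨j, hj⟩ := Finite.surjective_of_injective (qinj i) (p (i', ⟨0, by omega⟩)).2
    have : p (i, j) = p (i', ⟨0, by omega⟩) :=
      Prod.ext_iff.mpr ⟨by rw [hfst, hfst, h], hj⟩
    have := pinj this
    exact congrArg Prod.fst this
  -- second component
  set ε : Fin n → Bool := fun i => decide ((p (i, ⟨0, by omega⟩)).2.val ≠ 0) with hε
  have hsnd : ∀ (i : Fin n) (j : Fin (k-1)), (p (i, j)).2 = if ε i then j.rev else j := by
    intro i
    set qn : ℕ → ℕ := fun jv => if h : jv < k-1 then (p (i, ⟨jv, h⟩)).2.val else 0 with hqn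
    have qbd : ∀ a, a < k-1 → qn a < k - 1 := by
      intro a ha
      simp only [hqn, dif_pos ha]
      exact (p (i, ⟨a, ha⟩)).2.isLt
    have qninj : ∀ a, a < k-1 → ∀ b, b < k-1 → qn a = qn b → a = b := by
      intro a ha b hb h
      simp only [hqn, dif_pos ha, dif_pos hb] at h
      have := qinj i (Fin.ext h)
      simpa using this
    have qstep : ∀ jv, jv + 1 < k - 1 → (qn (jv+1) = qn jv + 1 ∨ qn jv = qn (jv+1) + 1) := by
      intro jv h
      have hv : jv < k - 1 := by omega
      have hadj : (windmill n k).Adj (some (i, ⟨jv, hv⟩)) (some (i, ⟨jv+1, h⟩)) := by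
        rw [wm_adj_some_some]
        exact ⟨rfl, Or.inl rfl⟩
      have hpa := padj _ _ hadj
      rw [wm_adj_some_some'] at hpa
      simp only [hqn, dif_pos hv, dif_pos h]
      exact hpa.2
    have q0 : qn 0 = 0 ∨ qn 0 = k - 2 := by
      have hadj : (windmill n k).Adj none (some (i, ⟨0, by omega⟩)) := by
        rw [wm_adj_none_some]; left; rfl
      have hpa := pnadj _ hadj
      rw [wm_adj_none_some'] at hpa
      simpa only [hqn, dif_pos (by omega : (0:ℕ) < k - 1)] using hpa
    have hqval : ∀ (j : Fin (k-1)), qn j.val = (p (i, j)).2.val := by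
      intro j
      simp only [hqn, dif_pos j.isLt]
    have hq0 : qn 0 = (p (i, ⟨0, by omega⟩)).2.val := by
      simp only [hqn, dif_pos (show (0:ℕ) < k-1 by omega)]
    rcases q0 with h0 | h0
    · have hid := path_rigid (k-1) qn qninj h0 qstep
      have hεi : ε i = false := by
        simp only [hε, decide_eq_false_iff_not, ne_eq, not_not]
        omega
      intro j
      rw [if_neg (by rw [hεi]; simp)]
      apply Fin.ext
      rw [← hqval j]
      exact hid j.val j.isLt
    · have hrev := path_rigid (k-1) (fun jv => k - 2 - qn jv)
        (by
          intro a ha b hb h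
          have := qbd a ha; have := qbd b hb
          exact qninj a ha b hb (by omega))
        (by omega)
        (by
          intro jv h
          have h1 := qstep jv h
          have := qbd jv (by omega); have := qbd (jv+1) h
          omega)
      have hεi : ε i = true := by
        simp only [hε, decide_eq_true_iff, ne_eq]
        omega
      intro j
      rw [if_pos hεi]
      apply Fin.ext
      rw [← hqval j, val_rev]
      have h2 := hrev j.val j.isLt
      have := qbd j.val j.isLt
      omega
  -- assemble
  refine ⟨Equiv.ofBijective σf ⟨σinj, Finite.surjective_of_injective σinj⟩, ε, ?_⟩
  apply RelIso.ext
  rintro (_ | ⟨i, j⟩)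
  · exact hnone
  · rw [hp]
    show _ = wPerm n (k-1) _ ε (some (i, j))
    rw [wPerm_some]
    exact congrArg some (Prod.ext_iff.mpr ⟨hfst i j, hsnd i j⟩)

def wEdge (n k : ℕ) (hk : 3 ≤ k) (x : Fin n × Fin k) :
    Sym2 (Option (Fin n × Fin (k-1))) :=
  if x.2.val = 0 then s(none, some (x.1, ⟨0, by omega⟩))
  else if h2 : x.2.val = k - 1 then s(none, some (x.1, ⟨k-2, by omega⟩))
  else s(some (x.1, ⟨x.2.val - 1, by have := x.2.isLt; omega⟩),
         some (x.1, ⟨x.2.val, by have := x.2.isLt; omega⟩))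

lemma wEdge_mem (n k : ℕ) (hk : 3 ≤ k) (x : Fin n × Fin k) :
    wEdge n k hk x ∈ (windmill n k).edgeSet := by
  have := x.2.isLt
  rw [wEdge]
  split_ifs with h0 h1
  · rw [SimpleGraph.mem_edgeSet, wm_adj_none_some]; left; rfl
  · rw [SimpleGraph.mem_edgeSet, wm_adj_none_some]; right; rfl
  · rw [SimpleGraph.mem_edgeSet, wm_adj_some_some]
    exact ⟨rfl, Or.inl (by show x.2.val = x.2.val - 1 + 1; omega)⟩

lemma wEdge_inj (n k : ℕ) (hk : 3 ≤ k) : Function.Injective (wEdge n k hk) := by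
  rintro ⟨i, t⟩ ⟨i', t'⟩ h
  have ht := t.isLt; have ht' := t'.isLt
  simp only [wEdge] at h
  split_ifs at h with h0 h0' h1 h1' h1'' <;>
    simp only [Sym2.eq_iff, Option.some.injEq, Prod.mk.injEq, Fin.mk.injEq, Fin.ext_iff,
      reduceCtorEq, false_and, and_false, or_false, false_or, and_true, true_and,
      or_self] at h <;>
    simp only [Prod.mk.injEq, Fin.ext_iff] <;>
    omega

lemma wEdge_surj (n k : ℕ) (hk : 3 ≤ k) (e : Sym2 (Option (Fin n × Fin (k-1))))
    (he : e ∈ (windmill n k).edgeSet) : ∃ x, wEdge n k hk x = e := by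
  induction e with
  | _ a b =>
    rw [SimpleGraph.mem_edgeSet] at he
    match a, b with
    | none, none => exact absurd he (windmill n k).irrefl
    | none, some (i, j) =>
      rw [wm_adj_none_some] at he
      have hj := j.isLt
      rcases he with h | h
      · refine ⟨(i, ⟨0, by omega⟩), ?_⟩
        have hj0 : j = (⟨0, by omega⟩ : Fin (k-1)) := Fin.ext h
        rw [wEdge, if_pos rfl, hj0]
      · refine ⟨(i, ⟨k-1, by omega⟩), ?_⟩
        have hj0 : j = (⟨k-2, by omega⟩ : Fin (k-1)) := Fin.ext h
        rw [wEdge, if_neg (show ¬((k-1:ℕ) = 0) by omega), dif_pos rfl, hj0]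
    | some (i, j), none =>
      rw [(windmill n k).adj_comm, wm_adj_none_some] at he
      have hj := j.isLt
      rcases he with h | h
      · refine ⟨(i, ⟨0, by omega⟩), ?_⟩
        have hj0 : j = (⟨0, by omega⟩ : Fin (k-1)) := Fin.ext h
        rw [wEdge, if_pos rfl, hj0, Sym2.eq_swap]
      · refine ⟨(i, ⟨k-1, by omega⟩), ?_⟩
        have hj0 : j = (⟨k-2, by omega⟩ : Fin (k-1)) := Fin.ext h
        rw [wEdge, if_neg (show ¬((k-1:ℕ) = 0) by omega), dif_pos rfl, hj0, Sym2.eq_swap]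
    | some (i, j), some (i', j') =>
      rw [wm_adj_some_some] at he
      obtain ⟨rfl, h | h⟩ := he
      · have hj' := j'.isLt
        refine ⟨(i, ⟨j'.val, by omega⟩), ?_⟩
        have e1 : (⟨j'.val - 1, by omega⟩ : Fin (k-1)) = j := Fin.ext (by show j'.val - 1 = j.val; omega)
        have e2 : (⟨j'.val, by omega⟩ : Fin (k-1)) = j' := Fin.ext rfl
        rw [wEdge, if_neg (show ¬(j'.val = 0) by omega),
          dif_neg (show ¬(j'.val = k - 1) by omega)]
        exact congrArg₂ (fun a b => s(some (i,a), some (i,b))) e1 e2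
      · have hj := j.isLt
        refine ⟨(i, ⟨j.val, by omega⟩), ?_⟩
        have e1 : (⟨j.val - 1, by omega⟩ : Fin (k-1)) = j' := Fin.ext (by show j.val - 1 = j'.val; omega)
        have e2 : (⟨j.val, by omega⟩ : Fin (k-1)) = j := Fin.ext rfl
        rw [wEdge, if_neg (show ¬(j.val = 0) by omega),
          dif_neg (show ¬(j.val = k - 1) by omega)]
        exact (congrArg₂ (fun a b => s(some (i,a), some (i,b))) e1 e2).trans Sym2.eq_swap

lemma wAct_apply (n k : ℕ) (hk : 3 ≤ k) (σ : Equiv.Perm (Fin n)) (ε : Fin n → Bool)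
    (v : Option (Fin n × Fin (k-1))) :
    wAct n k hk σ ε v = wPerm n (k-1) σ ε v := rfl

lemma wEdge_map (n k : ℕ) (hk : 3 ≤ k) (σ : Equiv.Perm (Fin n)) (ε : Fin n → Bool)
    (x : Fin n × Fin k) :
    Sym2.map (wAct n k hk σ ε) (wEdge n k hk x) =
      wEdge n k hk (σ x.1, if ε x.1 then x.2.rev else x.2) := by
  obtain ⟨i, t⟩ := x
  dsimp only
  have ht := t.isLt
  have hval : ∀ (a : ℕ) (h : a < k-1), ((⟨a, h⟩ : Fin (k-1)).rev).val = k - 2 - a := by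
    intro a h
    rw [Fin.val_rev]
    show (k-1) - (a+1) = k - 2 - a
    omega
  have hvrev : (t.rev).val = k - 1 - t.val := by rw [Fin.val_rev]; omega
  by_cases hε : ε i = true
  · rw [if_pos hε]
    by_cases h0 : t.val = 0
    · simp only [wEdge]
      rw [if_pos h0, if_neg (show ¬(t.rev.val = 0) by omega),
        dif_pos (show t.rev.val = k - 1 by omega), Sym2.map_pair_eq,
        wAct_apply, wAct_apply, wPerm_none, wPerm_some, if_pos hε]
      exact congrArg (fun a => s(none, some (σ i, a)))
        (Fin.ext (show (k-1) - (0+1) = k - 2 by omega))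
    · by_cases h1 : t.val = k - 1
      · simp only [wEdge]
        rw [if_neg h0, dif_pos h1, if_pos (show t.rev.val = 0 by omega), Sym2.map_pair_eq,
          wAct_apply, wAct_apply, wPerm_none, wPerm_some, if_pos hε]
        exact congrArg (fun a => s(none, some (σ i, a)))
          (Fin.ext (show (k-1) - (k-2+1) = 0 by omega))
      · simp only [wEdge]
        rw [if_neg h0, dif_neg h1, if_neg (show ¬(t.rev.val = 0) by omega),
          dif_neg (show ¬(t.rev.val = k-1) by omega), Sym2.map_pair_eq,
          wAct_apply, wAct_apply, wPerm_some, wPerm_some, if_pos hε, if_pos hε,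
          Sym2.eq_swap]
        exact congrArg₂ (fun a b => s(some (σ i, a), some (σ i, b)))
          (Fin.ext (by rw [hval]; show k - 2 - (t.val) = t.rev.val - 1; omega))
          (Fin.ext (by rw [hval]; show k - 2 - (t.val - 1) = t.rev.val; omega))
  · rw [if_neg hε]
    by_cases h0 : t.val = 0
    · simp only [wEdge]
      rw [if_pos h0, if_pos h0, Sym2.map_pair_eq,
        wAct_apply, wAct_apply, wPerm_none, wPerm_some, if_neg hε]
    · by_cases h1 : t.val = k - 1
      · simp only [wEdge]
        rw [if_neg h0, if_neg h0, dif_pos h1, dif_pos h1, Sym2.map_pair_eq,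
          wAct_apply, wAct_apply, wPerm_none, wPerm_some, if_neg hε]
      · simp only [wEdge]
        rw [if_neg h0, if_neg h0, dif_neg h1, dif_neg h1, Sym2.map_pair_eq,
          wAct_apply, wAct_apply, wPerm_some, wPerm_some, if_neg hε, if_neg hε]

lemma wAct_inj (n k : ℕ) (hk : 3 ≤ k) :
    Function.Injective (fun z : Equiv.Perm (Fin n) × (Fin n → Bool) =>
      wAct n k hk z.1 z.2) := by
  rintro ⟨σ, ε⟩ ⟨σ', ε'⟩ h
  have h' : wAct n k hk σ ε = wAct n k hk σ' ε' := h
  have heval : ∀ v, wAct n k hk σ ε v = wAct n k hk σ' ε' v :=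
    fun v => by rw [h']
  have key : ∀ i, σ i = σ' i ∧ ε i = ε' i := by
    intro i
    have := heval (some (i, ⟨0, by omega⟩))
    rw [wAct_apply, wAct_apply, wPerm_some, wPerm_some] at this
    simp only [Option.some.injEq, Prod.mk.injEq] at this
    obtain ⟨h1, h2⟩ := this
    refine ⟨h1, ?_⟩
    have hrev0 : ((⟨0, by omega⟩ : Fin (k-1)).rev) ≠ ⟨0, by omega⟩ := by
      intro hcon
      have := congrArg Fin.val hcon
      have h3 : (k-1) - (0+1) = (0:ℕ) := this
      omega
    cases hε : ε i <;> cases hε' : ε' i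
    · rfl
    · rw [hε, hε', if_neg (by simp), if_pos rfl] at h2
      exact absurd h2.symm hrev0
    · rw [hε, hε', if_pos rfl, if_neg (by simp)] at h2
      exact absurd h2 hrev0
    · rfl
  have hσ : σ = σ' := Equiv.ext fun i => (key i).1
  have hε : ε = ε' := funext fun i => (key i).2
  rw [Prod.ext_iff]
  exact ⟨hσ, hε⟩

noncomputable def wEquiv (n k : ℕ) (hn : 2 ≤ n) (hk : 3 ≤ k) :
    (Equiv.Perm (Fin n) × (Fin n → Bool)) ≃ (windmill n k ≃g windmill n k) :=
  Equiv.ofBijective (fun z => wAct n k hk z.1 z.2)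
    ⟨wAct_inj n k hk, fun φ => by
      obtain ⟨σ, ε, h⟩ := wm_classify n k hn hk φ
      exact ⟨(σ, ε), h.symm⟩⟩

lemma wAct_id_params (n k : ℕ) (hk : 3 ≤ k) (σ : Equiv.Perm (Fin n)) (ε : Fin n → Bool)
    (h : ∀ v, wAct n k hk σ ε v = v) : ∀ i, σ i = i ∧ ε i = false := by
  intro i
  have h2 := h (some (i, ⟨0, by omega⟩))
  rw [wAct_apply, wPerm_some] at h2
  simp only [Option.some.injEq, Prod.mk.injEq] at h2
  obtain ⟨h1, h2⟩ := h2
  refine ⟨h1, ?_⟩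
  cases hε : ε i
  · rfl
  · exfalso
    rw [hε, if_pos rfl] at h2
    have := congrArg Fin.val h2
    have h3 : (k-1) - (0+1) = (0:ℕ) := this
    omega

lemma wAct_id_of_params (n k : ℕ) (hk : 3 ≤ k) (σ : Equiv.Perm (Fin n)) (ε : Fin n → Bool)
    (h : ∀ i, σ i = i ∧ ε i = false) : ∀ v, wAct n k hk σ ε v = v := by
  rintro (_ | ⟨i, j⟩)
  · rfl
  · rw [wAct_apply, wPerm_some, (h i).1, (h i).2]
    simp


theorem windmill_aut_equiv_and_index_eq_number (n k : ℕ) (hn : 2 ≤ n) (hk : 3 ≤ k) :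
    Nonempty ((windmill n (k + 1) ≃g windmill n (k + 1)) ≃ (windmill n k ≃g windmill n k)) ∧
      distinguishingIndex (windmill n k) = distinguishingNumber (windmill n (k + 1)) := by
  constructor
  · exact ⟨(wEquiv n (k+1) hn (by omega)).symm.trans (wEquiv n k hn hk)⟩
  · show sInf _ = sInf _
    congr 1
    ext d
    simp only [Set.mem_setOf_eq]
    constructor
    · rintro ⟨f, hf⟩
      refine ⟨fun v => match v with
        | none => f s(none, none)
        | some x => f (wEdge n k hk x), ?_⟩
      intro φ hφ
      obtain ⟨σ, ε, rfl⟩ := wm_classify n (k+1) hn (by omega) φ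
      have hψ : ∀ e ∈ (windmill n k).edgeSet,
          f (Sym2.map (wAct n k hk σ ε) e) = f e := by
        intro e he
        obtain ⟨x, rfl⟩ := wEdge_surj n k hk e he
        rw [wEdge_map]
        obtain ⟨i, t⟩ := x
        have h1 := hφ (some (i, t))
        rw [wAct_apply, wPerm_some] at h1
        dsimp only at h1 ⊢
        exact h1
      have hid := hf (wAct n k hk σ ε) hψ
      have hparams := wAct_id_params n k hk σ ε hid
      exact wAct_id_of_params n (k+1) (by omega) σ ε hparams
    · rintro ⟨g, hg⟩
      classical
      set f : Sym2 (Option (Fin n × Fin (k-1))) → Fin d :=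
        fun e => if h : ∃ x, wEdge n k hk x = e then g (some h.choose) else g none with hfdef
      have hfE : ∀ x, f (wEdge n k hk x) = g (some x) := by
        intro x
        have hex : ∃ y, wEdge n k hk y = wEdge n k hk x := ⟨x, rfl⟩
        rw [hfdef]
        simp only [dif_pos hex]
        exact congrArg (fun y => g (some y)) (wEdge_inj n k hk hex.choose_spec)
      refine ⟨f, ?_⟩
      intro φ hφ
      obtain ⟨σ, ε, rfl⟩ := wm_classify n k hn hk φ
      have hψ : ∀ v, g (wAct n (k+1) (by omega : 3 ≤ k+1) σ ε v) = g v := by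
        rintro (_ | ⟨i, t⟩)
        · rfl
        · rw [wAct_apply, wPerm_some]
          have h1 := hφ (wEdge n k hk (i, t)) (wEdge_mem n k hk (i, t))
          rw [wEdge_map] at h1
          dsimp only at h1
          rw [hfE, hfE] at h1
          exact h1
      have hid := hg (wAct n (k+1) (by omega) σ ε) hψ
      have hparams := wAct_id_params n (k+1) (by omega) σ ε hid
      exact wAct_id_of_params n k hk σ ε hparams
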